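/- Let G be a group, S a finite subset of G, and C a convexoid on G that is S⁻¹S-midpointed (for all g ∈ G, h ∈ S⁻¹S, every convex set containing both gh and gh⁻¹ has closure containing g; equivalently g lies in the intersection of all convex sets containing {gh, gh⁻¹}). Then C has S-unique corner positioning: for every C ∈ C and every lax corner a of C (a ∈ C with a not in the closure of C \ {a}), there is at most one g ∈ G with a ∈ gS ⊆ C. -/

import Mathlib

open Pointwise

attribute [local instance] Classical.propDecidable

/-- The closure of a finite set `B`: intersection of all members of `𝒞` containing `B`. -/
def memClosure {G : Type*} (𝒞 : Set (Finset G)) (B : Finset G) : Set G :=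
  {x | ∀ C ∈ 𝒞, B ⊆ C → x ∈ C}

/-- A convexoid: `∅` is a member, every finite set is contained in some member, and the
corner addition property holds. -/
def IsConvexoid {G : Type*} (𝒞 : Set (Finset G)) : Prop :=
  (∅ : Finset G) ∈ 𝒞 ∧ (∀ B : Finset G, ∃ C ∈ 𝒞, B ⊆ C) ∧
    ∀ C ∈ 𝒞, ∀ D ∈ 𝒞, C ⊂ D → ∃ a ∈ D, a ∉ C ∧ insert a C ∈ 𝒞

/-- An `S⁻¹S`-midpointed convexoid has `S`-unique corner positioning: every lax corner
of a convex set is covered by at most one translate of `S` inside the set. -/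
theorem stmt6 {G : Type*} [Group G] (S : Finset G) (𝒞 : Set (Finset G))
    (hconv : IsConvexoid 𝒞)
    (hmid : ∀ g : G, ∀ h ∈ S⁻¹ * S, g ∈ memClosure 𝒞 {g * h, g * h⁻¹}) :
    ∀ C ∈ 𝒞, ∀ a ∈ C, a ∉ memClosure 𝒞 (C.erase a) →
      ∀ g₁ g₂ : G, a ∈ g₁ • S → g₁ • S ⊆ C → a ∈ g₂ • S → g₂ • S ⊆ C → g₁ = g₂ := by
  intro C hC a haC hcorner g₁ g₂ h1 hsub1 h2 hsub2
  by_contra hne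
  obtain ⟨s₁, hs₁S, hs₁⟩ := Finset.mem_smul_finset.mp h1
  obtain ⟨s₂, hs₂S, hs₂⟩ := Finset.mem_smul_finset.mp h2
  simp only [smul_eq_mul] at hs₁ hs₂
  have hs12 : s₁ ≠ s₂ := by
    rintro rfl
    exact hne (by rw [← mul_left_inj s₁, hs₁, hs₂])
  set h : G := s₂⁻¹ * s₁ with hh
  have hhmem : h ∈ S⁻¹ * S :=
    Finset.mul_mem_mul (Finset.inv_mem_inv hs₂S) hs₁S
  have hah : a * h = g₂ * s₁ := by rw [← hs₂, hh]; group
  have hah' : a * h⁻¹ = g₁ * s₂ := by rw [← hs₁, hh]; group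
  have hne1 : h ≠ 1 := by
    intro h1'
    exact hs12 (inv_mul_eq_one.mp (hh ▸ h1')).symm
  have hmem1 : a * h ∈ C.erase a := by
    refine Finset.mem_erase.mpr ⟨?_, hsub2 ?_⟩
    · intro heq; exact hne1 (mul_eq_left.mp heq)
    · rw [hah]; exact Finset.smul_mem_smul_finset hs₁S
  have hmem2 : a * h⁻¹ ∈ C.erase a := by
    refine Finset.mem_erase.mpr ⟨?_, hsub1 ?_⟩
    · intro heq
      exact hne1 (inv_eq_one.mp (mul_eq_left.mp heq))
    · rw [hah']; exact Finset.smul_mem_smul_finset hs₂S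
  apply hcorner
  intro C' hC' hsub'
  apply hmid a h hhmem C' hC'
  intro x hx
  rcases Finset.mem_insert.mp hx with rfl | hx
  · exact hsub' hmem1
  · rw [Finset.mem_singleton.mp hx]
    exact hsub' hmem2
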